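/- Let A be an abelian group and θ: A → A an endomorphism. Suppose (a) the induced endomorphism θ[1/ℓ] of the localization A[1/ℓ] is an automorphism, (b) for each a ∈ A there exists i ∈ ℕ with θ^i(a) ∈ ℓA, and (c) whenever ℓa = 0 for some a ∈ A, there exists i ∈ ℕ with θ^i(a) = 0. Then the colimit of the diagram A →θ A →θ A → ⋯ is isomorphic, compatibly with the maps from A, to the localization A[1/ℓ] ≅ ℤ[1/ℓ] ⊗ A. -/

import Mathlib

open TensorProduct

noncomputable section

/-- `ℤ[1/ℓ]`. -/
abbrev Zloc (ℓ : ℤ) : Type := Localization.Away ℓ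

/-- `A[1/ℓ] = ℤ[1/ℓ] ⊗_ℤ A`. -/
abbrev loc (ℓ : ℤ) (A : Type) [AddCommGroup A] : Type := Zloc ℓ ⊗[ℤ] A

/-- The map `A → A[1/ℓ]`, `a ↦ 1 ⊗ a`. -/
def toLoc (ℓ : ℤ) (A : Type) [AddCommGroup A] : A →+ loc ℓ A :=
  ((TensorProduct.mk ℤ (Zloc ℓ) A) 1).toAddMonoidHom

/-- The induced endomorphism `θ[1/ℓ]` of `A[1/ℓ]`. -/
def locMap (ℓ : ℤ) {A : Type} [AddCommGroup A] (θ : A →+ A) : loc ℓ A →+ loc ℓ A :=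
  (LinearMap.lTensor (Zloc ℓ) θ.toIntLinearMap).toAddMonoidHom

/-- The sequential colimit of `A → A → A → ⋯` along `θ`. -/
abbrev seqColim {A : Type} [AddCommGroup A] (θ : A →+ A) : Type :=
  AddCommGroup.DirectLimit (fun _ : ℕ => A)
    (fun i j _ => show A →+ A from (show AddMonoid.End A from θ) ^ (j - i))

/-- The canonical map `A → colim_θ A` (at stage 0). -/
def seqColimOf {A : Type} [AddCommGroup A] (θ : A →+ A) : A →+ seqColim θ :=
  AddCommGroup.DirectLimit.of (fun _ : ℕ => A)
    (fun i j _ => show A →+ A from (show AddMonoid.End A from θ) ^ (j - i)) 0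

/-! ### Auxiliary lemmas -/

/-- If `1 ⊗ a = 0` in `A[1/ℓ]` then `a` is killed by a power of `ℓ`. -/
theorem toLoc_eq_zero {ℓ : ℤ} {A : Type} [AddCommGroup A] {a : A} (h : toLoc ℓ A a = 0) :
    ∃ k : ℕ, (ℓ^k : ℤ) • a = 0 := by
  set S := Submonoid.powers ℓ with hS
  set L := LocalizedModule S A with hL
  letI : Module ℤ L := OreLocalization.instModuleOfIsScalarTower
  let mkHom : A →+ L :=
    { toFun := fun a => LocalizedModule.mk a 1
      map_zero' := LocalizedModule.zero_mk 1
      map_add' := by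
        intro x y
        rw [LocalizedModule.mk_add_mk]
        simp }
  let f : Zloc ℓ →+ A →+ L :=
    { toFun := fun z => ((DistribMulAction.toAddMonoidHom L z).comp mkHom : A →+ L)
      map_zero' := by
        ext a
        exact zero_smul (Zloc ℓ) (mkHom a)
      map_add' := by
        intro z1 z2
        ext a
        exact add_smul z1 z2 (mkHom a) }
  have hbal : ∀ (n : ℤ) (z : Zloc ℓ) (a : A), f (n • z) a = f z (n • a) := by
    intro n z a
    show (n • z) • mkHom a = z • mkHom (n • a)
    have h2 : mkHom (n • a) = n • mkHom a := map_zsmul mkHom n a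
    have h3 := map_zsmul (DistribMulAction.toAddMonoidHom L z) n (mkHom a)
    simp only [DistribMulAction.toAddMonoidHom_apply] at h3
    rw [h2, h3, show (n • z) = ((n : ℤ) : Zloc ℓ) * z from zsmul_eq_mul z n]
    calc (((n : ℤ) : Zloc ℓ) * z) • mkHom a
        = ((n : ℤ) : Zloc ℓ) • z • mkHom a :=
          mul_smul (α := Zloc ℓ) (β := L) ((n : ℤ) : Zloc ℓ) z (mkHom a)
      _ = n • (z • mkHom a) := Int.cast_smul_eq_zsmul (R := Zloc ℓ) (M := L) n (z • mkHom a)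
  let χ : loc ℓ A →+ L := TensorProduct.liftAddHom f hbal
  have h2 : LocalizedModule.mk a (1 : S) = (0 : L) := by
    have hχ := congrArg χ h
    simp only [map_zero] at hχ
    rw [show toLoc ℓ A a = (1 : Zloc ℓ) ⊗ₜ[ℤ] a from rfl] at hχ
    rw [show χ ((1 : Zloc ℓ) ⊗ₜ[ℤ] a) = f 1 a from TensorProduct.liftAddHom_tmul f hbal 1 a] at hχ
    have : f 1 a = (1 : Zloc ℓ) • mkHom a := rfl
    rw [this] at hχ
    exact (one_smul (Zloc ℓ) (mkHom a)).symm.trans hχ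
  have h2' : LocalizedModule.mkLinearMap S A a = 0 := h2
  obtain ⟨s, hs⟩ := (IsLocalizedModule.eq_zero_iff S (LocalizedModule.mkLinearMap S A)).mp h2'
  obtain ⟨k, hk⟩ := s.2
  refine ⟨k, ?_⟩
  have hsa : (s : ℤ) • a = 0 := by simpa [Submonoid.smul_def] using hs
  rw [← hsa, ← hk]

/-- Multiplication by `ℓ^k` is injective on `A[1/ℓ]`. -/
theorem locSmul_injective {ℓ : ℤ} {A : Type} [AddCommGroup A] (k : ℕ) {x y : loc ℓ A}
    (h : (ℓ^k : ℤ) • x = (ℓ^k : ℤ) • y) : x = y := by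
  have hu : IsUnit (algebraMap ℤ (Zloc ℓ) ℓ) :=
    IsLocalization.map_units (Zloc ℓ) (⟨ℓ, Submonoid.mem_powers ℓ⟩ : Submonoid.powers ℓ)
  have hu' : IsUnit ((ℓ^k : ℤ) : Zloc ℓ) := by
    rw [← eq_intCast (algebraMap ℤ (Zloc ℓ)) (ℓ^k), map_pow]; exact hu.pow k
  obtain ⟨u, hu2⟩ := hu'
  have h' : (u : Zloc ℓ) • x = (u : Zloc ℓ) • y := by
    rw [hu2]
    rw [Int.cast_smul_eq_zsmul (R := Zloc ℓ) (M := loc ℓ A) (ℓ^k) x,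
      Int.cast_smul_eq_zsmul (R := Zloc ℓ) (M := loc ℓ A) (ℓ^k) y]
    exact h
  calc x = ((1 : Zloc ℓ)) • x := (one_smul (Zloc ℓ) x).symm
    _ = ((↑u⁻¹ * ↑u : Zloc ℓ)) • x := by rw [Units.inv_mul]
    _ = (↑u⁻¹ : Zloc ℓ) • ((u : Zloc ℓ) • x) :=
        mul_smul (α := Zloc ℓ) (β := loc ℓ A) _ _ x
    _ = (↑u⁻¹ : Zloc ℓ) • ((u : Zloc ℓ) • y) := by rw [h']
    _ = ((↑u⁻¹ * ↑u : Zloc ℓ)) • y :=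
        (mul_smul (α := Zloc ℓ) (β := loc ℓ A) _ _ y).symm
    _ = ((1 : Zloc ℓ)) • y := by rw [Units.inv_mul]
    _ = y := one_smul (Zloc ℓ) y

/-- Every element of `A[1/ℓ]` becomes an element of `A` after multiplying by a power of `ℓ`. -/
theorem locSmul_surj (ℓ : ℤ) (A : Type) [AddCommGroup A] (x : loc ℓ A) :
    ∃ (k : ℕ) (a : A), (ℓ^k : ℤ) • x = toLoc ℓ A a := by
  induction x using TensorProduct.induction_on with
  | zero => exact ⟨0, 0, by simp⟩
  | tmul z a =>
    obtain ⟨⟨r, s⟩, hrs⟩ := IsLocalization.surj (M := Submonoid.powers ℓ) (S := Zloc ℓ) z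
    obtain ⟨k, hk⟩ := s.2
    refine ⟨k, r • a, ?_⟩
    let m2 : Zloc ℓ →+ loc ℓ A :=
      (((TensorProduct.mk ℤ (Zloc ℓ) A).flip a) : Zloc ℓ →ₗ[ℤ] loc ℓ A).toAddMonoidHom
    have hm2 : ∀ w : Zloc ℓ, m2 w = w ⊗ₜ[ℤ] a := fun _ => rfl
    have hscal : (ℓ^k : ℤ) • z = (r : ℤ) • (1 : Zloc ℓ) := by
      rw [zsmul_eq_mul z (ℓ^k), zsmul_eq_mul (1 : Zloc ℓ) r, mul_one, mul_comm]
      rw [show ((ℓ^k : ℤ) : Zloc ℓ) = algebraMap ℤ (Zloc ℓ) (ℓ^k) from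
        (eq_intCast (algebraMap ℤ (Zloc ℓ)) (ℓ^k)).symm]
      rw [show ((r : ℤ) : Zloc ℓ) = algebraMap ℤ (Zloc ℓ) r from
        (eq_intCast (algebraMap ℤ (Zloc ℓ)) r).symm]
      have hk' : ℓ ^ k = (s : ℤ) := hk
      rw [hk']
      exact hrs
    calc (ℓ^k : ℤ) • (z ⊗ₜ[ℤ] a) = m2 ((ℓ^k : ℤ) • z) := (map_zsmul m2 _ _).symm
      _ = m2 ((r : ℤ) • (1 : Zloc ℓ)) := by rw [hscal]
      _ = (r : ℤ) • m2 (1 : Zloc ℓ) := map_zsmul m2 _ _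
      _ = (r : ℤ) • toLoc ℓ A a := rfl
      _ = toLoc ℓ A (r • a) := (map_zsmul (toLoc ℓ A) r a).symm
  | add x y hx hy =>
    obtain ⟨k1, a1, h1⟩ := hx
    obtain ⟨k2, a2, h2⟩ := hy
    refine ⟨k1 + k2, (ℓ^k2 : ℤ) • a1 + (ℓ^k1 : ℤ) • a2, ?_⟩
    have e1 : (ℓ^(k1+k2) : ℤ) • x = (ℓ^k2 : ℤ) • ((ℓ^k1 : ℤ) • x) := by
      rw [← mul_smul, ← pow_add, Nat.add_comm k1 k2]
    have e2 : (ℓ^(k1+k2) : ℤ) • y = (ℓ^k1 : ℤ) • ((ℓ^k2 : ℤ) • y) := by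
      rw [← mul_smul, ← pow_add]
    rw [smul_add, e1, e2, h1, h2, map_add, map_zsmul, map_zsmul]

/-- Lemma 2.2 (1)⇒(2): conditions (a),(b),(c) imply that the colimit of
`A →θ A →θ ⋯` is isomorphic to `A[1/ℓ]`, compatibly with the maps from `A`. -/
theorem lemma_localisation {A : Type} [AddCommGroup A] (ℓ : ℤ) (hℓ : 0 < ℓ) (θ : A →+ A)
    (ha : Function.Bijective (locMap ℓ θ))
    (hb : ∀ a : A, ∃ i : ℕ, ∃ b : A, (⇑θ)^[i] a = ℓ • b)
    (hc : ∀ a : A, ℓ • a = 0 → ∃ i : ℕ, (⇑θ)^[i] a = 0) :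
    ∃ e : seqColim θ ≃+ loc ℓ A, ∀ a : A, e (seqColimOf θ a) = toLoc ℓ A a := by
  classical
  -- iterates of θ commute with integer smul
  have hθsm : ∀ (j : ℕ) (n : ℤ) (x : A), (⇑θ)^[j] (n • x) = n • (⇑θ)^[j] x := by
    intro j
    induction j with
    | zero => intro n x; simp
    | succ j ih =>
      intro n x
      rw [Function.iterate_succ_apply', ih, map_zsmul, Function.iterate_succ_apply']
  -- iterated version of (b)
  have hbIter : ∀ (k : ℕ) (a : A), ∃ (i : ℕ) (b : A), (⇑θ)^[i] a = (ℓ^k : ℤ) • b := by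
    intro k
    induction k with
    | zero => intro a; exact ⟨0, a, by simp⟩
    | succ k ih =>
      intro a
      obtain ⟨i, b, hib⟩ := ih a
      obtain ⟨j, c, hjc⟩ := hb b
      refine ⟨j + i, c, ?_⟩
      rw [Function.iterate_add_apply, hib, hθsm, hjc, pow_succ, mul_smul]
  -- iterated version of (c)
  have hcIter : ∀ (k : ℕ) (a : A), (ℓ^k : ℤ) • a = 0 → ∃ i : ℕ, (⇑θ)^[i] a = 0 := by
    intro k
    induction k with
    | zero => intro a h0; exact ⟨0, by simpa using h0⟩
    | succ k ih =>
      intro a h0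
      have : (ℓ^k : ℤ) • (ℓ • a) = 0 := by
        rw [← mul_smul, ← pow_succ]; exact h0
      obtain ⟨i, hi⟩ := ih (ℓ • a) this
      have : ℓ • ((⇑θ)^[i] a) = 0 := by rw [← hθsm]; exact hi
      obtain ⟨j, hj⟩ := hc _ this
      exact ⟨j + i, by rw [Function.iterate_add_apply, hj]⟩
  -- setup
  have hF : ∀ (i j : ℕ) (h : i ≤ j) (x : A),
      ((show AddMonoid.End A from θ) ^ (j - i)) x = (⇑θ)^[j - i] x := by
    intro i j h x
    rw [AddMonoid.End.coe_pow]; rfl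
  let e0 : loc ℓ A ≃+ loc ℓ A := AddEquiv.ofBijective (locMap ℓ θ) ha
  have he0 : ∀ x, e0 x = locMap ℓ θ x := fun _ => rfl
  have hcomm : ∀ a, locMap ℓ θ (toLoc ℓ A a) = toLoc ℓ A (θ a) := by
    intro a; simp [locMap, toLoc]
  have hcomm_iter : ∀ (n : ℕ) (a : A),
      (⇑(locMap ℓ θ))^[n] (toLoc ℓ A a) = toLoc ℓ A ((⇑θ)^[n] a) := by
    intro n
    induction n with
    | zero => intro a; simp
    | succ n ih =>
      intro a
      rw [Function.iterate_succ_apply', ih, hcomm, Function.iterate_succ_apply']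
  have hcancel : ∀ (n : ℕ) (y : loc ℓ A),
      (⇑e0.symm)^[n] ((⇑(locMap ℓ θ))^[n] y) = y := by
    intro n
    induction n with
    | zero => intro y; simp
    | succ n ih =>
      intro y
      rw [Function.iterate_succ_apply' (⇑(locMap ℓ θ)), Function.iterate_succ_apply (⇑e0.symm)]
      have hcan1 : e0.symm (locMap ℓ θ (((⇑(locMap ℓ θ))^[n]) y)) = ((⇑(locMap ℓ θ))^[n]) y := by
        rw [← he0]
        exact e0.symm_apply_apply _
      rw [hcan1]
      exact ih y
  -- iterates of locMap commute with integer smul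
  have hlsm : ∀ (j : ℕ) (n : ℤ) (y : loc ℓ A),
      (⇑(locMap ℓ θ))^[j] (n • y) = n • (⇑(locMap ℓ θ))^[j] y := by
    intro j
    induction j with
    | zero => intro n y; simp
    | succ j ih =>
      intro n y
      rw [Function.iterate_succ_apply', ih, map_zsmul, Function.iterate_succ_apply']
  -- the compatible family of maps to the localization
  let g : ℕ → (A →+ loc ℓ A) := fun n =>
    AddMonoidHom.comp ((show AddMonoid.End (loc ℓ A) from e0.symm.toAddMonoidHom) ^ n)
      (toLoc ℓ A)
  have hg : ∀ (n : ℕ) (a : A), g n a = (⇑e0.symm)^[n] (toLoc ℓ A a) := by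
    intro n a
    show ((show AddMonoid.End (loc ℓ A) from e0.symm.toAddMonoidHom) ^ n) (toLoc ℓ A a)
      = (⇑e0.symm)^[n] (toLoc ℓ A a)
    rw [AddMonoid.End.coe_pow]
    rfl
  have Hg : ∀ (i j : ℕ) (hij : i ≤ j) (x : A),
      g j (((show AddMonoid.End A from θ) ^ (j - i)) x) = g i x := by
    intro i j hij x
    rw [hF i j hij x, hg, hg, ← hcomm_iter]
    have hj : j = i + (j - i) := (Nat.add_sub_cancel' hij).symm
    conv_lhs => rw [hj]
    rw [Nat.add_sub_cancel_left, Function.iterate_add_apply, hcancel]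
  let Φ : seqColim θ →+ loc ℓ A :=
    AddCommGroup.DirectLimit.lift (fun _ : ℕ => A)
      (fun i j _ => show A →+ A from (show AddMonoid.End A from θ) ^ (j - i)) (loc ℓ A) g Hg
  have hΦof : ∀ (i : ℕ) (x : A),
      Φ (AddCommGroup.DirectLimit.of (fun _ : ℕ => A)
        (fun i j _ => show A →+ A from (show AddMonoid.End A from θ) ^ (j - i)) i x) = g i x := by
    intro i x
    exact AddCommGroup.DirectLimit.lift_of (loc ℓ A) g Hg i x
  -- injectivity
  have hinj : Function.Injective Φ := by
    rw [injective_iff_map_eq_zero]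
    intro z
    induction z using AddCommGroup.DirectLimit.induction_on with
    | ih i x =>
      intro hz
      rw [hΦof, hg] at hz
      have h0 : toLoc ℓ A x = 0 := by
        apply (e0.symm.injective.iterate i)
        rw [hz]
        exact (Function.iterate_fixed (map_zero e0.symm) i).symm
      obtain ⟨k, hk⟩ := toLoc_eq_zero h0
      obtain ⟨m, hm⟩ := hcIter k x hk
      have hle : i ≤ i + m := Nat.le_add_right i m
      have h2 : ((show AddMonoid.End A from θ) ^ (i + m - i)) x = 0 := by
        rw [hF i (i + m) hle x, Nat.add_sub_cancel_left]
        exact hm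
      calc AddCommGroup.DirectLimit.of (fun _ : ℕ => A)
            (fun i j _ => show A →+ A from (show AddMonoid.End A from θ) ^ (j - i)) i x
          = AddCommGroup.DirectLimit.of (fun _ : ℕ => A)
            (fun i j _ => show A →+ A from (show AddMonoid.End A from θ) ^ (j - i)) (i + m)
            (((show AddMonoid.End A from θ) ^ (i + m - i)) x) :=
            (AddCommGroup.DirectLimit.of_f (G := fun _ : ℕ => A)
              (f := fun i j _ => (show AddMonoid.End A from θ) ^ (j - i)) hle x).symm
        _ = AddCommGroup.DirectLimit.of (fun _ : ℕ => A)
            (fun i j _ => show A →+ A from (show AddMonoid.End A from θ) ^ (j - i)) (i + m) 0 := by rw [h2]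
        _ = 0 := map_zero _
  -- surjectivity
  have hsurj : Function.Surjective Φ := by
    intro x
    obtain ⟨k, a, hka⟩ := locSmul_surj ℓ A x
    obtain ⟨i, b, hib⟩ := hbIter k a
    refine ⟨AddCommGroup.DirectLimit.of (fun _ : ℕ => A)
      (fun i j _ => show A →+ A from (show AddMonoid.End A from θ) ^ (j - i)) i b, ?_⟩
    rw [hΦof, hg]
    have key : toLoc ℓ A b = (⇑(locMap ℓ θ))^[i] x := by
      apply locSmul_injective k
      calc (ℓ^k : ℤ) • toLoc ℓ A b = toLoc ℓ A ((ℓ^k : ℤ) • b) :=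
            (map_zsmul (toLoc ℓ A) _ _).symm
        _ = toLoc ℓ A ((⇑θ)^[i] a) := by rw [hib]
        _ = (⇑(locMap ℓ θ))^[i] (toLoc ℓ A a) := (hcomm_iter i a).symm
        _ = (⇑(locMap ℓ θ))^[i] ((ℓ^k : ℤ) • x) := by rw [hka]
        _ = (ℓ^k : ℤ) • (⇑(locMap ℓ θ))^[i] x := hlsm i _ x
    rw [key, hcancel i x]
  refine ⟨AddEquiv.ofBijective Φ ⟨hinj, hsurj⟩, ?_⟩
  intro a
  show Φ (seqColimOf θ a) = toLoc ℓ A a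
  have : seqColimOf θ a = AddCommGroup.DirectLimit.of (fun _ : ℕ => A)
      (fun i j _ => show A →+ A from (show AddMonoid.End A from θ) ^ (j - i)) 0 a := rfl
  rw [this, hΦof, hg]
  simp
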